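/- Let w be a word over {2,3} of even height and odd length n = 2ℓ+1. Then w is a rop-word if and only if the word w^(ℓ), obtained by reading the letters of w in steps of ℓ modulo n starting from w_0, admits a 1-pairing (i.e., its occurrences of the letter 3 can be partitioned into adjacent pairs, cyclically). -/

import Mathlib

open Finset


/-- Height of a word is the sum of its letters. A rop-word over {2,3}: even height and
no cyclic rotation factors as `u ++ v` with equal heights. -/
def IsRopWord (w : List ℕ) : Prop :=
  (∀ a ∈ w, a = 2 ∨ a = 3) ∧ Even w.sum ∧
  ∀ (k : ℕ) (u v : List ℕ), w.rotate k = u ++ v → u.sum ≠ v.sum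

/-- A `d`-pairing of `w`: a partition of the set of indices carrying the letter 3 into
pairs `{j, (j+d) % w.length}`; `S` records the first element of each pair. -/
def HasDPairing (w : List ℕ) (d : ℕ) : Prop :=
  ∃ S : Finset ℕ,
    (∀ j ∈ S, j < w.length) ∧
    (∀ i < w.length, w.getD i 0 = 3 ↔
      (i ∈ S ∨ i ∈ S.image fun j => (j + d) % w.length)) ∧
    Disjoint S (S.image fun j => (j + d) % w.length) ∧
    Set.InjOn (fun j => (j + d) % w.length) ↑S

/-- `readStep w p` reads the letters of `w` by steps of `p` modulo its length,
starting from `w₀`. -/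
def readStep (w : List ℕ) (p : ℕ) : List ℕ :=
  (List.range w.length).map fun j => w.getD (j * p % w.length) 0


namespace Stmt7

/-- periodic 0/1 indicator of letter 3 -/
def chi (u : List ℕ) (j : ℕ) : ℕ := if u.getD (j % u.length) 0 = 3 then 1 else 0

/-- count of 3s in the cyclic window of length `r` starting at `k` -/
def cnt (u : List ℕ) (k r : ℕ) : ℕ := ∑ i ∈ Finset.range r, chi u (k + i)

/-- sum of the cyclic window of length `r` starting at `k` -/
def sig (u : List ℕ) (k r : ℕ) : ℕ := ∑ i ∈ Finset.range r, u.getD ((k + i) % u.length) 0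

/-- sum over even-offset positions -/
def gE (u : List ℕ) (ℓ b : ℕ) : ℕ := ∑ i ∈ Finset.range (ℓ + 1), chi u (b + 2 * i)

def gO (u : List ℕ) (ℓ b : ℕ) : ℕ := ∑ i ∈ Finset.range ℓ, chi u (b + 2 * i + 1)

lemma chi_le_one (u : List ℕ) (j : ℕ) : chi u j ≤ 1 := by
  unfold chi; split <;> simp

lemma chi_eq_zero_or_one (u : List ℕ) (j : ℕ) : chi u j = 0 ∨ chi u j = 1 := by
  unfold chi; split <;> simp

lemma chi_congr (u : List ℕ) {a b : ℕ} (h : a ≡ b [MOD u.length]) : chi u a = chi u b := by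
  unfold chi; rw [h]

lemma chi_add_len (u : List ℕ) (a : ℕ) : chi u (a + u.length) = chi u a :=
  chi_congr u (Nat.add_modEq_right.trans Nat.ModEq.rfl)

lemma sumShift (f : ℕ → ℕ) (n : ℕ) (hper : ∀ a, f (a + n) = f a) :
    ∀ b, ∑ c ∈ Finset.range n, f (b + c) = ∑ c ∈ Finset.range n, f c := by
  intro b
  induction b with
  | zero => simp
  | succ b ih =>
    have h1 : ∑ c ∈ Finset.range (n + 1), f (b + c)
        = (∑ c ∈ Finset.range n, f (b + c)) + f (b + n) := Finset.sum_range_succ _ n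
    have h2 : ∑ c ∈ Finset.range (n + 1), f (b + c)
        = (∑ c ∈ Finset.range n, f (b + (c + 1))) + f (b + 0) := Finset.sum_range_succ' _ n
    have h3 : ∑ c ∈ Finset.range n, f (b + (c + 1))
        = ∑ c ∈ Finset.range n, f (b + 1 + c) :=
      Finset.sum_congr rfl (fun c _ => by rw [show b + (c + 1) = b + 1 + c from by omega])
    rw [h3] at h2
    have h4 : f (b + 0) = f b := by norm_num
    rw [hper b] at h1
    rw [ih] at h1
    omega

lemma interleave (f : ℕ → ℕ) : ∀ k, ((∑ i ∈ Finset.range k, f (2 * i)) +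
    ∑ i ∈ Finset.range k, f (2 * i + 1)) = ∑ c ∈ Finset.range (2 * k), f c := by
  intro k
  induction k with
  | zero => simp
  | succ k ih =>
    rw [Finset.sum_range_succ, Finset.sum_range_succ,
      show 2 * (k + 1) = (2 * k + 1) + 1 from by omega,
      Finset.sum_range_succ, Finset.sum_range_succ]
    omega

/-- the key recurrence for `gE` -/
lemma gE_rec (u : List ℕ) (ℓ : ℕ) (hn : u.length = 2 * ℓ + 1) (b : ℕ) :
    gE u ℓ b + gE u ℓ (b + 1) = (∑ c ∈ Finset.range u.length, chi u c) + chi u b := by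
  have h1 : gE u ℓ (b + 1) = ∑ i ∈ Finset.range (ℓ + 1), (fun c => chi u (b + c)) (2 * i + 1) :=
    Finset.sum_congr rfl (fun i _ => by
      show chi u (b + 1 + 2 * i) = chi u (b + (2 * i + 1)); rw [show b + 1 + 2*i = b + (2*i+1) from by omega])
  have h2 : gE u ℓ b = ∑ i ∈ Finset.range (ℓ + 1), (fun c => chi u (b + c)) (2 * i) := rfl
  rw [h1, h2, interleave (fun c => chi u (b + c)) (ℓ + 1),
    show 2 * (ℓ + 1) = (2 * ℓ + 1) + 1 from by omega, Finset.sum_range_succ]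
  have h3 : chi u (b + (2 * ℓ + 1)) = chi u b := by rw [← hn]; exact chi_add_len u b
  rw [h3, ← hn]
  have h4 := sumShift (fun c => chi u c) u.length (fun a => chi_add_len u a) b
  omega

/-- the chain contradiction: an odd run of 3s is impossible when all `gE ≥ s` -/
lemma chain (u : List ℕ) (ℓ s : ℕ) (hn : u.length = 2 * ℓ + 1)
    (hs : (∑ c ∈ Finset.range u.length, chi u c) = 2 * s)
    (hcond : ∀ b, s ≤ gE u ℓ b) (a r : ℕ) (hr : r % 2 = 1)
    (h0 : chi u a = 0) (h1 : ∀ k, 1 ≤ k → k ≤ r → chi u (a + k) = 1)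
    (h2 : chi u (a + r + 1) = 0) : False := by
  have key : ∀ k, k ≤ r → gE u ℓ (a + 1 + k) = s + k % 2 := by
    intro k
    induction k with
    | zero =>
      intro _
      have e := gE_rec u ℓ hn a
      rw [hs, h0] at e
      have := hcond a; have := hcond (a + 1)
      simp only [Nat.add_zero]
      omega
    | succ k ih =>
      intro hk
      have ihk := ih (by omega)
      have e := gE_rec u ℓ hn (a + 1 + k)
      rw [hs] at e
      have hc : chi u (a + 1 + k) = 1 := by
        have := h1 (k + 1) (by omega) hk
        rw [show a + (k + 1) = a + 1 + k from by omega] at this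
        exact this
      rw [hc] at e
      have := hcond (a + 1 + k); have := hcond (a + 1 + (k + 1))
      rw [show a + 1 + k + 1 = a + 1 + (k + 1) from by omega] at e
      omega
  have hk := key r le_rfl
  rw [hr] at hk
  have e := gE_rec u ℓ hn (a + 1 + r)
  rw [hs, show a + 1 + r = a + r + 1 from by omega, h2] at e
  rw [show a + r + 1 = a + 1 + r from by omega] at e
  have := hcond (a + 1 + r + 1)
  omega

/-- backward run length: `brun u z j` = length of the maximal block of 3s ending at
position `z + j` (for `j ≥ 1`), where `z` is a fixed position with a 2. -/
def brun (u : List ℕ) (z : ℕ) : ℕ → ℕ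
  | 0 => 0
  | (i + 1) => if chi u (z + 1 + i) = 1 then brun u z i + 1 else 0

lemma brun_le (u : List ℕ) (z : ℕ) : ∀ j, brun u z j ≤ j := by
  intro j
  induction j with
  | zero => simp [brun]
  | succ j ih => rw [brun]; split <;> omega

lemma brun_lower (u : List ℕ) (z : ℕ) : ∀ j k, k < brun u z j → chi u (z + j - k) = 1 := by
  intro j
  induction j with
  | zero => intro k hk; simp [brun] at hk
  | succ j ih =>
    intro k hk
    rw [brun] at hk
    by_cases hc : chi u (z + 1 + j) = 1
    · rw [if_pos hc] at hk
      rcases Nat.eq_zero_or_pos k with h0 | h0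
      · subst h0
        rw [show z + (j + 1) - 0 = z + 1 + j from by omega]
        exact hc
      · have : k - 1 < brun u z j := by omega
        have := ih (k - 1) this
        have hkj : k ≤ j + 1 := by have := brun_le u z j; omega
        rw [show z + (j + 1) - k = z + j - (k - 1) from by omega]
        exact this
    · rw [if_neg hc] at hk; omega

lemma brun_boundary (u : List ℕ) (z : ℕ) (hz : chi u z = 0) :
    ∀ j, chi u (z + j - brun u z j) = 0 := by
  intro j
  induction j with
  | zero => simpa [brun] using hz
  | succ j ih =>
    rw [brun]
    by_cases hc : chi u (z + 1 + j) = 1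
    · rw [if_pos hc]
      have hb := brun_le u z j
      rw [show z + (j + 1) - (brun u z j + 1) = z + j - brun u z j from by omega]
      exact ih
    · rw [if_neg hc]
      rw [show z + (j + 1) - 0 = z + 1 + j from by omega]
      rcases chi_eq_zero_or_one u (z + 1 + j) with h | h
      · exact h
      · exact absurd h hc

lemma chi_one_of_brun_succ (u : List ℕ) (z j : ℕ) (h : 1 ≤ brun u z (j + 1)) :
    chi u (z + 1 + j) = 1 := by
  rw [brun] at h
  by_cases hc : chi u (z + 1 + j) = 1
  · exact hc
  · rw [if_neg hc] at h; omega

/-- Claim C: under the condition, a position with odd backward run is followed by a 3. -/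
lemma claimC (u : List ℕ) (ℓ s z : ℕ) (hn : u.length = 2 * ℓ + 1)
    (hs : (∑ c ∈ Finset.range u.length, chi u c) = 2 * s)
    (hcond : ∀ b, s ≤ gE u ℓ b) (hz : chi u z = 0) :
    ∀ j, 1 ≤ j → brun u z j % 2 = 1 → chi u (z + j + 1) = 1 := by
  intro j hj hodd
  rcases chi_eq_zero_or_one u (z + j + 1) with hnext | hnext
  · exfalso
    set r := brun u z j with hrdef
    have hrle : r ≤ j := brun_le u z j
    have hr1 : 1 ≤ r := by omega
    refine chain u ℓ s hn hs hcond (z + j - r) r hodd ?_ ?_ ?_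
    · exact brun_boundary u z hz j
    · intro k hk1 hkr
      have := brun_lower u z j (r - k) (by omega)
      rw [show z + j - (r - k) = z + j - r + k from by omega] at this
      exact this
    · rw [show z + j - r + r + 1 = z + j + 1 from by omega]
      exact hnext
  · exact hnext

lemma mod_small_inj {n a b : ℕ} (ha : a < n) (hb : b < n) (h : a ≡ b [MOD n]) : a = b := by
  rwa [Nat.ModEq, Nat.mod_eq_of_lt ha, Nat.mod_eq_of_lt hb] at h

lemma chi_eq_one_iff (u : List ℕ) (i : ℕ) (hi : i < u.length) :
    chi u i = 1 ↔ u.getD i 0 = 3 := by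
  unfold chi
  rw [Nat.mod_eq_of_lt hi]
  split <;> simp_all

lemma buildPairing (u : List ℕ) (ℓ s : ℕ) (hn : u.length = 2 * ℓ + 1)
    (hs : (∑ c ∈ Finset.range u.length, chi u c) = 2 * s)
    (hcond : ∀ b, s ≤ gE u ℓ b) :
    ∃ S : Finset ℕ,
      (∀ j ∈ S, j < u.length) ∧
      (∀ i < u.length, u.getD i 0 = 3 ↔
        (i ∈ S ∨ i ∈ S.image fun j => (j + 1) % u.length)) ∧
      Disjoint S (S.image fun j => (j + 1) % u.length) ∧
      Set.InjOn (fun j => (j + 1) % u.length) ↑S := by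
  have hnpos : 0 < u.length := by omega
  by_cases hex : ∃ z, z < u.length ∧ chi u z = 0
  case neg =>
    exfalso
    have hall : ∀ c ∈ Finset.range u.length, chi u c = 1 := by
      intro c hc
      rcases chi_eq_zero_or_one u c with h | h
      · exact absurd ⟨c, Finset.mem_range.mp hc, h⟩ hex
      · exact h
    rw [Finset.sum_congr rfl hall] at hs
    simp at hs
    omega
  obtain ⟨z, hzlt, hz⟩ := hex
  have C := claimC u ℓ s z hn hs hcond hz
  set n := u.length with hnd
  have hchi_p : ∀ q, chi u ((z + 1 + q) % n) = chi u (z + 1 + q) :=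
    fun q => chi_congr u (Nat.mod_modEq _ _)
  have hp2 : ∀ q, ((z + 1 + q) % n + 1) % n = (z + 1 + (q + 1)) % n := by
    intro q
    rw [Nat.mod_add_mod, Nat.add_assoc]
  have hpinj : ∀ q1 q2, q1 < n → q2 < n → (z + 1 + q1) % n = (z + 1 + q2) % n → q1 = q2 := by
    intro q1 q2 h1 h2 h
    exact mod_small_inj h1 h2 (Nat.ModEq.add_left_cancel' (z + 1) h)
  have brun_n_zero : brun u z n = 0 := by
    obtain ⟨m, hm⟩ : ∃ m, n = m + 1 := ⟨n - 1, by omega⟩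
    rw [hm, brun]
    have h0 : chi u (z + 1 + m) = 0 := by
      rw [show z + 1 + m = z + n from by omega, hnd, chi_add_len u z]
      exact hz
    rw [h0]
    simp
  refine ⟨((Finset.range n).filter (fun q => brun u z (q + 1) % 2 = 1)).image
      (fun q => (z + 1 + q) % n), ?_, ?_, ?_, ?_⟩
  · intro j hj
    obtain ⟨q, _, rfl⟩ := Finset.mem_image.mp hj
    exact Nat.mod_lt _ hnpos
  · intro i hi
    have memS : ∀ {i}, (i ∈ ((Finset.range n).filter (fun q => brun u z (q + 1) % 2 = 1)).image
        (fun q => (z + 1 + q) % n)) ↔ ∃ q, q < n ∧ brun u z (q + 1) % 2 = 1 ∧ (z + 1 + q) % n = i := by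
      intro i
      simp only [Finset.mem_image, Finset.mem_filter, Finset.mem_range]
      constructor
      · rintro ⟨q, ⟨h1, h2⟩, h3⟩; exact ⟨q, h1, h2, h3⟩
      · rintro ⟨q, h1, h2, h3⟩; exact ⟨q, ⟨h1, h2⟩, h3⟩
    have memIm : ∀ {i}, (i ∈ (((Finset.range n).filter (fun q => brun u z (q + 1) % 2 = 1)).image
        (fun q => (z + 1 + q) % n)).image (fun j => (j + 1) % n)) ↔
        ∃ q, q < n ∧ brun u z (q + 1) % 2 = 1 ∧ (z + 1 + (q + 1)) % n = i := by
      intro i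
      rw [Finset.image_image]
      simp only [Finset.mem_image, Finset.mem_filter, Finset.mem_range, Function.comp]
      constructor
      · rintro ⟨q, ⟨h1, h2⟩, h3⟩; exact ⟨q, h1, h2, by rw [← hp2 q]; exact h3⟩
      · rintro ⟨q, h1, h2, h3⟩; exact ⟨q, ⟨h1, h2⟩, by rw [hp2 q]; exact h3⟩
    constructor
    · intro h3
      have hchi_i : chi u i = 1 := (chi_eq_one_iff u i hi).mpr h3
      -- find the preimage q
      set c := (z + 1) % n with hcd
      have hclt : c < n := Nat.mod_lt _ hnpos
      set q := (i + (n - c)) % n with hqd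
      have hq_lt : q < n := Nat.mod_lt _ hnpos
      have hq : (z + 1 + q) % n = i := by
        have e1 : z + 1 + q ≡ c + (i + (n - c)) [MOD n] :=
          Nat.ModEq.add (Nat.mod_modEq (z + 1) n).symm (Nat.mod_modEq _ n)
        have e2 : c + (i + (n - c)) = i + n := by omega
        have e3 : z + 1 + q ≡ i [MOD n] := by
          rw [e2] at e1
          exact e1.trans (Nat.add_modEq_right)
        rw [Nat.ModEq] at e3
        rwa [Nat.mod_eq_of_lt hi] at e3
      have hchiq : chi u (z + 1 + q) = 1 := by rw [← hchi_p q, hq]; exact hchi_i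
      have hbq : brun u z (q + 1) = brun u z q + 1 := by rw [brun, if_pos hchiq]
      by_cases hodd : brun u z (q + 1) % 2 = 1
      · exact Or.inl (memS.mpr ⟨q, hq_lt, hodd, hq⟩)
      · right
        have hq1 : 1 ≤ q := by
          by_contra hq0
          have hq00 : q = 0 := by omega
          rw [hq00] at hbq hodd
          have hb0 : brun u z 0 = 0 := rfl
          omega
        apply memIm.mpr
        refine ⟨q - 1, by omega, ?_, ?_⟩
        · rw [show q - 1 + 1 = q from by omega]
          omega
        · rw [show q - 1 + 1 = q from by omega]
          exact hq
    · intro h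
      rcases h with hS | hIm
      · obtain ⟨q, hqlt, hodd, hq⟩ := memS.mp hS
        have h1 : 1 ≤ brun u z (q + 1) := by omega
        have := chi_one_of_brun_succ u z q h1
        rw [← hq] at *
        rw [← chi_eq_one_iff u _ (Nat.mod_lt _ hnpos)]
        rw [hchi_p q]
        exact this
      · obtain ⟨q, hqlt, hodd, hq⟩ := memIm.mp hIm
        have := C (q + 1) (by omega) hodd
        rw [show z + (q + 1) + 1 = z + 1 + (q + 1) from by omega] at this
        rw [← hq, ← chi_eq_one_iff u _ (Nat.mod_lt _ hnpos)]
        rw [hchi_p (q + 1)]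
        exact this
  · rw [Finset.disjoint_left]
    intro j hjS hjIm
    rw [Finset.image_image] at hjIm
    simp only [Finset.mem_image, Finset.mem_filter, Finset.mem_range, Function.comp] at hjS hjIm
    obtain ⟨q1, ⟨hq1lt, hodd1⟩, hq1⟩ := hjS
    obtain ⟨q2, ⟨hq2lt, hodd2⟩, hq2⟩ := hjIm
    rw [hp2 q2] at hq2
    have hq2n : q2 + 1 < n := by
      rcases Nat.lt_or_ge (q2 + 1) n with h | h
      · exact h
      · exfalso
        have : q2 + 1 = n := by omega
        rw [this, brun_n_zero] at hodd2
        omega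
    have : q1 = q2 + 1 := hpinj q1 (q2 + 1) hq1lt hq2n (by rw [hq1, hq2])
    subst this
    have hc := C (q2 + 1) (by omega) hodd2
    have : brun u z (q2 + 1 + 1) = brun u z (q2 + 1) + 1 := by
      rw [brun, if_pos (by rw [show z + 1 + (q2 + 1) = z + (q2 + 1) + 1 from by omega]; exact hc)]
    omega
  · intro j1 h1 j2 h2 heq
    simp only [Finset.coe_image, Set.mem_image, Finset.mem_coe, Finset.mem_filter,
      Finset.mem_range] at h1 h2
    obtain ⟨q1, _, hq1⟩ := h1
    obtain ⟨q2, _, hq2⟩ := h2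
    have hj1 : j1 < n := by rw [← hq1]; exact Nat.mod_lt _ hnpos
    have hj2 : j2 < n := by rw [← hq2]; exact Nat.mod_lt _ hnpos
    simp only at heq
    exact mod_small_inj hj1 hj2 (Nat.ModEq.add_right_cancel' 1 heq)

lemma chi_eq_one_iff' (u : List ℕ) (j : ℕ) :
    chi u j = 1 ↔ u.getD (j % u.length) 0 = 3 := by
  unfold chi; split <;> simp_all

lemma gE_add_gO (u : List ℕ) (ℓ : ℕ) (hn : u.length = 2 * ℓ + 1) (b : ℕ) :
    gE u ℓ b + gO u ℓ b = ∑ c ∈ Finset.range u.length, chi u c := by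
  unfold gE gO
  rw [Finset.sum_range_succ]
  have h2 : (∑ i ∈ Finset.range ℓ, chi u (b + 2 * i + 1))
      = ∑ i ∈ Finset.range ℓ, chi u (b + (2 * i + 1)) :=
    Finset.sum_congr rfl (fun i _ => by rw [Nat.add_assoc])
  have h3 := interleave (fun c => chi u (b + c)) ℓ
  have h4 : (∑ c ∈ Finset.range (2 * ℓ), chi u (b + c)) + chi u (b + 2 * ℓ)
      = ∑ c ∈ Finset.range (2 * ℓ + 1), chi u (b + c) := (Finset.sum_range_succ _ (2 * ℓ)).symm
  have h5 : ∑ c ∈ Finset.range (2 * ℓ + 1), chi u (b + c)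
      = ∑ c ∈ Finset.range u.length, chi u c := by
    rw [← hn]
    exact sumShift _ _ (fun a => chi_add_len u a) b
  omega

lemma pairing_cond (u : List ℕ) (ℓ s : ℕ) (hn : u.length = 2 * ℓ + 1)
    (hs : (∑ c ∈ Finset.range u.length, chi u c) = 2 * s)
    (S : Finset ℕ)
    (hS1 : ∀ j ∈ S, j < u.length)
    (hS2 : ∀ i < u.length, u.getD i 0 = 3 ↔
      (i ∈ S ∨ i ∈ S.image fun j => (j + 1) % u.length))
    (hS3 : Disjoint S (S.image fun j => (j + 1) % u.length))
    (hS4 : Set.InjOn (fun j => (j + 1) % u.length) ↑S) :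
    ∀ b, s ≤ gE u ℓ b := by
  intro b
  set n := u.length with hnd
  have hnpos : 0 < n := by omega
  have hcard : ∀ (m : ℕ) (g : ℕ → ℕ), (∑ i ∈ Finset.range m, chi u (g i))
      = ((Finset.range m).filter (fun i => chi u (g i) = 1)).card := by
    intro m g
    rw [Finset.card_filter]
    refine Finset.sum_congr rfl (fun i _ => ?_)
    rcases chi_eq_zero_or_one u (g i) with h | h <;> simp [h]
  have hgE : gE u ℓ b = ((Finset.range (ℓ + 1)).filter (fun i => chi u (b + 2 * i) = 1)).card :=
    hcard (ℓ + 1) (fun i => b + 2 * i)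
  have hgO : gO u ℓ b = ((Finset.range ℓ).filter (fun i => chi u (b + 2 * i + 1) = 1)).card :=
    hcard ℓ (fun i => b + 2 * i + 1)
  -- injection from odd-offset 3s to even-offset 3s
  have hinj : ((Finset.range ℓ).filter (fun i => chi u (b + 2 * i + 1) = 1)).card ≤
      ((Finset.range (ℓ + 1)).filter (fun i => chi u (b + 2 * i) = 1)).card := by
    apply Finset.card_le_card_of_injOn (fun i => if (b + 2 * i + 1) % n ∈ S then i + 1 else i)
    · -- membership
      intro i hi
      simp only [Finset.mem_coe] at hi ⊢
      rw [Finset.mem_filter, Finset.mem_range] at hi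
      obtain ⟨hilt, hichi⟩ := hi
      have hPlt : (b + 2 * i + 1) % n < n := Nat.mod_lt _ hnpos
      have hP3 : u.getD ((b + 2 * i + 1) % n) 0 = 3 := (chi_eq_one_iff' u _).mp hichi
      by_cases hPS : (b + 2 * i + 1) % n ∈ S
      · rw [if_pos hPS, Finset.mem_filter, Finset.mem_range]
        refine ⟨by omega, ?_⟩
        have hidx : (b + 2 * (i + 1)) % n = ((b + 2 * i + 1) % n + 1) % n := by
          rw [Nat.mod_add_mod, show b + 2 * i + 1 + 1 = b + 2 * (i + 1) from by omega]
        have hmem : ((b + 2 * i + 1) % n + 1) % n ∈ S.image (fun j => (j + 1) % n) :=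
          Finset.mem_image.mpr ⟨_, hPS, rfl⟩
        have h3 : u.getD (((b + 2 * i + 1) % n + 1) % n) 0 = 3 :=
          (hS2 _ (Nat.mod_lt _ hnpos)).mpr (Or.inr hmem)
        rw [chi_eq_one_iff', ← hnd, hidx]
        exact h3
      · rw [if_neg hPS, Finset.mem_filter, Finset.mem_range]
        refine ⟨by omega, ?_⟩
        have himg := (hS2 _ hPlt).mp hP3
        rcases himg with h | h
        · exact absurd h hPS
        · obtain ⟨x, hxS, hx⟩ := Finset.mem_image.mp h
          have hxlt : x < n := hS1 x hxS
          have hx' : x + 1 ≡ b + 2 * i + 1 [MOD n] :=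
            (Nat.mod_modEq (x + 1) n).symm.trans (by rw [hx] ; exact Nat.mod_modEq _ n)
          have hxe : x = (b + 2 * i) % n := by
            have := Nat.ModEq.add_right_cancel' 1 hx'
            rw [Nat.ModEq, Nat.mod_eq_of_lt hxlt] at this
            exact this
          have hx3 : u.getD x 0 = 3 := (hS2 x hxlt).mpr (Or.inl hxS)
          rw [chi_eq_one_iff', ← hnd, ← hxe]
          exact hx3
    · -- injectivity
      intro i1 hi1 i2 hi2 heq
      simp only [Finset.coe_filter, Set.mem_setOf_eq, Finset.mem_range] at hi1 hi2
      obtain ⟨hi1lt, hi1chi⟩ := hi1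
      obtain ⟨hi2lt, hi2chi⟩ := hi2
      simp only at heq
      have key : ∀ j1 j2, j1 < ℓ → j2 < ℓ → chi u (b + 2 * j2 + 1) = 1 →
          (b + 2 * j1 + 1) % n ∈ S → ¬ (b + 2 * j2 + 1) % n ∈ S → j1 + 1 = j2 → False := by
        intro j1 j2 hj1 hj2 hchi2 hj1S hj2S hj12
        have hP3 : u.getD ((b + 2 * j2 + 1) % n) 0 = 3 := (chi_eq_one_iff' u _).mp hchi2
        have himg := (hS2 _ (Nat.mod_lt _ hnpos)).mp hP3
        rcases himg with h | h
        · exact hj2S h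
        · obtain ⟨x, hxS, hx⟩ := Finset.mem_image.mp h
          have hxlt : x < n := hS1 x hxS
          have hx' : x + 1 ≡ b + 2 * j2 + 1 [MOD n] :=
            (Nat.mod_modEq (x + 1) n).symm.trans (by rw [hx]; exact Nat.mod_modEq _ n)
          have hxe : x = (b + 2 * j2) % n := by
            have := Nat.ModEq.add_right_cancel' 1 hx'
            rw [Nat.ModEq, Nat.mod_eq_of_lt hxlt] at this
            exact this
          have hmem1 : ((b + 2 * j1 + 1) % n + 1) % n ∈ S.image (fun j => (j + 1) % n) :=
            Finset.mem_image.mpr ⟨_, hj1S, rfl⟩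
          have hidx : ((b + 2 * j1 + 1) % n + 1) % n = (b + 2 * j2) % n := by
            rw [Nat.mod_add_mod]
            congr 1
            omega
          rw [hidx, ← hxe] at hmem1
          exact Finset.disjoint_left.mp hS3 hxS hmem1
      by_cases c1 : (b + 2 * i1 + 1) % n ∈ S <;> by_cases c2 : (b + 2 * i2 + 1) % n ∈ S
      · rw [if_pos c1, if_pos c2] at heq; omega
      · rw [if_pos c1, if_neg c2] at heq
        exact absurd heq (fun h => key i1 i2 hi1lt hi2lt hi2chi c1 c2 h)
      · rw [if_neg c1, if_pos c2] at heq
        exact absurd heq.symm (fun h => key i2 i1 hi2lt hi1lt hi1chi c2 c1 h)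
      · rw [if_neg c1, if_neg c2] at heq; exact heq
  have htot := gE_add_gO u ℓ hn b
  rw [hs] at htot
  omega

lemma sum_getD : ∀ (l : List ℕ), l.sum = ∑ i ∈ Finset.range l.length, l.getD i 0 := by
  intro l
  induction l with
  | nil => simp
  | cons a l ih =>
    rw [List.sum_cons, List.length_cons, Finset.sum_range_succ']
    simp only [List.getD_cons_succ, List.getD_cons_zero]
    omega

lemma sig_eq_cnt (w : List ℕ) (hw : ∀ a ∈ w, a = 2 ∨ a = 3) (hpos : 0 < w.length)
    (k r : ℕ) : sig w k r = 2 * r + cnt w k r := by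
  unfold sig cnt
  have hpt : ∀ i, w.getD ((k + i) % w.length) 0 = 2 + chi w (k + i) := by
    intro i
    have hmem : w.getD ((k + i) % w.length) 0 ∈ w := by
      rw [List.getD_eq_getElem w 0 (Nat.mod_lt _ hpos)]
      exact List.getElem_mem _
    rcases hw _ hmem with h | h <;> (unfold chi; rw [h]; norm_num)
  rw [Finset.sum_congr rfl (fun i _ => hpt i), Finset.sum_add_distrib, Finset.sum_const,
    Finset.card_range, smul_eq_mul]
  omega

lemma cnt_split (w : List ℕ) (k r1 r2 : ℕ) :
    cnt w k (r1 + r2) = cnt w k r1 + cnt w (k + r1) r2 := by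
  unfold cnt
  induction r2 with
  | zero => simp
  | succ r2 ih =>
    rw [show r1 + (r2 + 1) = (r1 + r2) + 1 from by omega, Finset.sum_range_succ,
      Finset.sum_range_succ, ih, show k + (r1 + r2) = k + r1 + r2 from by omega]
    omega

lemma sig_split (w : List ℕ) (k r1 r2 : ℕ) :
    sig w k (r1 + r2) = sig w k r1 + sig w (k + r1) r2 := by
  unfold sig
  induction r2 with
  | zero => simp
  | succ r2 ih =>
    rw [show r1 + (r2 + 1) = (r1 + r2) + 1 from by omega, Finset.sum_range_succ,
      Finset.sum_range_succ, ih, show k + (r1 + r2) = k + r1 + r2 from by omega]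
    omega

lemma cnt_full (w : List ℕ) (k : ℕ) :
    cnt w k w.length = ∑ c ∈ Finset.range w.length, chi w c := by
  unfold cnt
  exact sumShift _ _ (fun a => chi_add_len w a) k

lemma cnt_mono (w : List ℕ) (k : ℕ) {r1 r2 : ℕ} (h : r1 ≤ r2) : cnt w k r1 ≤ cnt w k r2 := by
  unfold cnt
  exact Finset.sum_le_sum_of_subset (Finset.range_subset_range.mpr h)

lemma chi_mod (w : List ℕ) (a : ℕ) : chi w (a % w.length) = chi w a :=
  chi_congr w (Nat.mod_modEq _ _)

lemma take_sum : ∀ (l : List ℕ) (r : ℕ), r ≤ l.length →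
    (l.take r).sum = ∑ i ∈ Finset.range r, l.getD i 0 := by
  intro l
  induction l with
  | nil =>
    intro r hr
    simp only [List.length_nil, Nat.le_zero] at hr
    subst hr
    simp
  | cons a l ih =>
    intro r hr
    cases r with
    | zero => simp
    | succ r =>
      rw [List.take_succ_cons, List.sum_cons,
        ih r (by simpa using hr), Finset.sum_range_succ']
      simp only [List.getD_cons_succ, List.getD_cons_zero]
      omega

lemma takeRot_sum (w : List ℕ) (hpos : 0 < w.length) (k r : ℕ) (hr : r ≤ w.length) :
    ((w.rotate k).take r).sum = sig w k r := by
  rw [take_sum _ r (by rwa [List.length_rotate])]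
  unfold sig
  refine Finset.sum_congr rfl (fun i hi => ?_)
  rw [Finset.mem_range] at hi
  have hilt : i < (w.rotate k).length := by rw [List.length_rotate]; omega
  rw [List.getD_eq_getElem _ 0 hilt, List.getElem_rotate,
    List.getD_eq_getElem _ 0 (Nat.mod_lt _ hpos)]
  congr 1
  rw [Nat.add_comm]

lemma wsum_eq (w : List ℕ) (hw : ∀ a ∈ w, a = 2 ∨ a = 3) (hpos : 0 < w.length) :
    w.sum = 2 * w.length + ∑ c ∈ Finset.range w.length, chi w c := by
  have h1 : w.sum = sig w 0 w.length := by
    rw [sum_getD w]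
    unfold sig
    refine Finset.sum_congr rfl (fun i hi => ?_)
    rw [Finset.mem_range] at hi
    rw [Nat.zero_add, Nat.mod_eq_of_lt hi]
  rw [h1, sig_eq_cnt w hw hpos, cnt_full]

lemma ropIff (w : List ℕ) (hw : ∀ a ∈ w, a = 2 ∨ a = 3) (hpos : 0 < w.length) (s : ℕ)
    (hts : (∑ c ∈ Finset.range w.length, chi w c) = 2 * s) :
    (∀ (k : ℕ) (u v : List ℕ), w.rotate k = u ++ v → u.sum ≠ v.sum) ↔
    (∀ k r, 0 < r → r < w.length → sig w k r ≠ w.length + s) := by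
  have hws : w.sum = 2 * (w.length + s) := by
    rw [wsum_eq w hw hpos, hts]; ring
  have hrotsum : ∀ k, (w.rotate k).sum = w.sum := fun k => (w.rotate_perm k).sum_eq
  constructor
  · intro P k r hr0 hrn
    intro hcontra
    have h1 : ((w.rotate k).take r).sum = w.length + s := by
      rw [takeRot_sum w hpos k r (le_of_lt hrn)]; exact hcontra
    have hsplit : w.rotate k = (w.rotate k).take r ++ (w.rotate k).drop r :=
      (List.take_append_drop r (w.rotate k)).symm
    have hne := P k _ _ hsplit
    have htot : ((w.rotate k).take r).sum + ((w.rotate k).drop r).sum = w.sum := by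
      rw [← List.sum_append, ← hsplit]; exact hrotsum k
    have h2 : ((w.rotate k).drop r).sum = w.length + s := by omega
    exact hne (h1.trans h2.symm)
  · intro hwin k u v hsplit hsum
    have hlen : u.length + v.length = w.length := by
      have := congrArg List.length hsplit
      simp [List.length_rotate, List.length_append] at this
      omega
    have hult : u.length ≤ w.length := by omega
    have husum : u.sum = sig w k u.length := by
      have hu : u = (w.rotate k).take u.length := by rw [hsplit, List.take_left]
      rw [hu, takeRot_sum w hpos k u.length hult]
      rw [← hu]
    have htot : u.sum + v.sum = w.sum := by
      rw [← List.sum_append, ← hsplit]; exact hrotsum k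
    have hus : u.sum = w.length + s := by omega
    rcases Nat.eq_zero_or_pos u.length with h0 | h0
    · rw [h0] at husum
      have : sig w k 0 = 0 := by simp [sig]
      omega
    rcases Nat.lt_or_ge u.length w.length with hlt | hge
    · exact hwin k u.length h0 hlt (by omega)
    · have : u.length = w.length := by omega
      rw [this] at husum
      have hfull : sig w k w.length = 2 * (w.length + s) := by
        rw [sig_eq_cnt w hw hpos, cnt_full, hts]; ring
      omega

lemma cond_to_nowin_aux (w : List ℕ) (hw : ∀ a ∈ w, a = 2 ∨ a = 3) (ℓ s : ℕ)
    (hl : w.length = 2 * ℓ + 1) (hts : (∑ c ∈ Finset.range w.length, chi w c) = 2 * s)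
    (hcond : ∀ k, s ≤ cnt w k (ℓ + 1)) :
    ∀ k r, 0 < r → r ≤ ℓ → sig w k r ≠ w.length + s := by
  intro k r h0 hr hcontra
  have hpos : 0 < w.length := by omega
  have e1 : 2 * r + cnt w k r = w.length + s := by
    rw [← sig_eq_cnt w hw hpos]; exact hcontra
  have e2 : cnt w k r + cnt w (k + r) (w.length - r) = 2 * s := by
    have h := cnt_split w k r (w.length - r)
    rw [show r + (w.length - r) = w.length from by omega, cnt_full, hts] at h
    omega
  have e3 : cnt w (k + r) (ℓ + 1) ≤ cnt w (k + r) (w.length - r) :=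
    cnt_mono w (k + r) (by omega)
  have := hcond (k + r)
  omega

lemma cond_to_nowin (w : List ℕ) (hw : ∀ a ∈ w, a = 2 ∨ a = 3) (ℓ s : ℕ)
    (hl : w.length = 2 * ℓ + 1) (hts : (∑ c ∈ Finset.range w.length, chi w c) = 2 * s)
    (hcond : ∀ k, s ≤ cnt w k (ℓ + 1)) :
    ∀ k r, 0 < r → r < w.length → sig w k r ≠ w.length + s := by
  intro k r h0 hrn hcontra
  have hpos : 0 < w.length := by omega
  rcases le_or_gt r ℓ with hr | hr
  · exact cond_to_nowin_aux w hw ℓ s hl hts hcond k r h0 hr hcontra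
  · have hfull : sig w k w.length = 2 * (w.length + s) := by
      rw [sig_eq_cnt w hw hpos, cnt_full, hts]; ring
    have hsplit := sig_split w k r (w.length - r)
    rw [show r + (w.length - r) = w.length from by omega] at hsplit
    have h2 : sig w (k + r) (w.length - r) = w.length + s := by omega
    exact cond_to_nowin_aux w hw ℓ s hl hts hcond (k + r) (w.length - r)
      (by omega) (by omega) h2

lemma nowin_to_cond (w : List ℕ) (hw : ∀ a ∈ w, a = 2 ∨ a = 3) (ℓ s : ℕ)
    (hl : w.length = 2 * ℓ + 1) (hts : (∑ c ∈ Finset.range w.length, chi w c) = 2 * s)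
    (hwin : ∀ k r, 0 < r → r < w.length → sig w k r ≠ w.length + s) :
    ∀ k, s ≤ cnt w k (ℓ + 1) := by
  by_contra hno
  push_neg at hno
  obtain ⟨k0, hk0⟩ := hno
  have hpos : 0 < w.length := by omega
  have hs1 : 1 ≤ s := by omega
  have htle : 2 * s ≤ w.length := by
    rw [← hts]
    calc (∑ c ∈ Finset.range w.length, chi w c) ≤ ∑ c ∈ Finset.range w.length, 1 :=
          Finset.sum_le_sum (fun c _ => chi_le_one w c)
      _ = w.length := by simp
  have hl1 : 1 ≤ ℓ := by omega
  -- double counting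
  have hinner : ∀ i, (∑ k ∈ Finset.range w.length, chi w (k + i)) = 2 * s := by
    intro i
    have h1 : (∑ k ∈ Finset.range w.length, chi w (k + i))
        = ∑ k ∈ Finset.range w.length, chi w (i + k) :=
      Finset.sum_congr rfl (fun k _ => by rw [Nat.add_comm])
    rw [h1, sumShift _ _ (fun a => chi_add_len w a) i, hts]
  have hdouble : (∑ k ∈ Finset.range w.length, cnt w k (ℓ + 1)) = (ℓ + 1) * (2 * s) := by
    unfold cnt
    rw [Finset.sum_comm]
    rw [Finset.sum_congr rfl (fun i _ => hinner i), Finset.sum_const, Finset.card_range,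
      smul_eq_mul]
  obtain ⟨k1, hk1lt, hk1⟩ : ∃ k1, k1 < w.length ∧ s ≤ cnt w k1 (ℓ + 1) := by
    by_contra hno2
    push_neg at hno2
    have hle : (∑ k ∈ Finset.range w.length, cnt w k (ℓ + 1))
        ≤ ∑ _k ∈ Finset.range w.length, (s - 1) :=
      Finset.sum_le_sum (fun k hk => by
        have := hno2 k (Finset.mem_range.mp hk); omega)
    rw [Finset.sum_const, Finset.card_range, smul_eq_mul] at hle
    have h1 : (ℓ + 1) * (2 * s) = w.length * s + s := by rw [hl]; ring
    have h2 : w.length * (s - 1) + w.length = w.length * s := by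
      obtain ⟨s', rfl⟩ : ∃ s', s = s' + 1 := ⟨s - 1, by omega⟩
      simp [Nat.add_sub_cancel]
      ring
    omega
  -- discrete IVT
  have hstep : ∀ k, cnt w (k + 1) (ℓ + 1) ≤ cnt w k (ℓ + 1) + 1 := by
    intro k
    have i1 : cnt w k (ℓ + 2) = cnt w k (ℓ + 1) + chi w (k + (ℓ + 1)) := by
      unfold cnt; exact Finset.sum_range_succ _ (ℓ + 1)
    have i2 : cnt w k (ℓ + 2) = (∑ i ∈ Finset.range (ℓ + 1), chi w (k + (i + 1))) + chi w (k + 0) := by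
      unfold cnt; exact Finset.sum_range_succ' _ (ℓ + 1)
    have i3 : (∑ i ∈ Finset.range (ℓ + 1), chi w (k + (i + 1))) = cnt w (k + 1) (ℓ + 1) := by
      unfold cnt
      exact Finset.sum_congr rfl (fun i _ => by rw [show k + (i + 1) = k + 1 + i from by omega])
    have := chi_le_one w (k + 0)
    have := chi_le_one w (k + (ℓ + 1))
    omega
  have hperiod : ∀ j k, cnt w (k + w.length * j) (ℓ + 1) = cnt w k (ℓ + 1) := by
    intro j
    induction j with
    | zero => simp
    | succ j ih =>
      intro k
      have h1 : k + w.length * (j + 1) = (k + w.length * j) + w.length := by ring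
      rw [h1]
      have h2 : cnt w ((k + w.length * j) + w.length) (ℓ + 1) = cnt w (k + w.length * j) (ℓ + 1) := by
        unfold cnt
        refine Finset.sum_congr rfl (fun i _ => ?_)
        rw [show k + w.length * j + w.length + i = (k + w.length * j + i) + w.length from by omega]
        exact chi_add_len w _
      rw [h2, ih]
  have hit : ∀ d a, cnt w a (ℓ + 1) < s → s ≤ cnt w (a + d) (ℓ + 1) →
      ∃ c, cnt w c (ℓ + 1) + 1 = s := by
    intro d
    induction d with
    | zero =>
      intro a h1 h2
      rw [Nat.add_zero] at h2
      omega
    | succ d ih =>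
      intro a h1 h2
      rcases Nat.lt_or_ge (cnt w (a + d) (ℓ + 1)) s with h | h
      · have := hstep (a + d)
        rw [show a + (d + 1) = (a + d) + 1 from by omega] at h2
        exact ⟨a + d, by omega⟩
      · exact ih a h1 h
  have hup : k0 + 1 ≤ w.length * (k0 + 1) := Nat.le_mul_of_pos_left (k0 + 1) hpos
  obtain ⟨c, hc⟩ := hit (k1 + w.length * (k0 + 1) - k0) k0 hk0 (by
    rw [show k0 + (k1 + w.length * (k0 + 1) - k0) = k1 + w.length * (k0 + 1) from by omega,
      hperiod (k0 + 1) k1]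
    exact hk1)
  have hsig : sig w c (ℓ + 1) = w.length + s := by
    rw [sig_eq_cnt w hw hpos]
    omega
  exact hwin c (ℓ + 1) (by omega) (by omega) hsig

lemma readStep_length (w : List ℕ) (ℓ : ℕ) : (readStep w ℓ).length = w.length := by
  simp [readStep]

lemma chi_read (w : List ℕ) (ℓ : ℕ) (hpos : 0 < w.length) (j : ℕ) :
    chi (readStep w ℓ) j = chi w (j * ℓ) := by
  have hulen : (readStep w ℓ).length = w.length := readStep_length w ℓ
  have hjlt : j % w.length < w.length := Nat.mod_lt _ hpos
  have h1 : (readStep w ℓ).getD (j % (readStep w ℓ).length) 0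
      = w.getD ((j % w.length) * ℓ % w.length) 0 := by
    rw [hulen, List.getD_eq_getElem _ 0 (by rw [hulen]; exact hjlt)]
    unfold readStep
    rw [List.getElem_map, List.getElem_range]
  have h2 : (j % w.length) * ℓ % w.length = j * ℓ % w.length :=
    Nat.ModEq.mul_right ℓ (Nat.mod_modEq j w.length)
  unfold chi
  rw [h1, h2]

lemma inv_key (w : List ℕ) (ℓ : ℕ) (hl : w.length = 2 * ℓ + 1) :
    ((w.length - 2) * ℓ) % w.length = 1 % w.length := by
  cases ℓ with
  | zero => simp [hl]
  | succ ℓ' =>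
    have e : (w.length - 2) * (ℓ' + 1) = 1 + w.length * ℓ' := by
      rw [hl, show 2 * (ℓ' + 1) + 1 - 2 = 2 * ℓ' + 1 from by omega]
      ring
    rw [e, Nat.add_mul_mod_self_left]

lemma inv_cancel_left (w : List ℕ) (ℓ : ℕ) (hl : w.length = 2 * ℓ + 1) {a : ℕ}
    (ha : a < w.length) : (a * ℓ % w.length) * (w.length - 2) % w.length = a := by
  have h1 : (a * ℓ % w.length) * (w.length - 2) ≡ (a * ℓ) * (w.length - 2) [MOD w.length] :=
    Nat.ModEq.mul_right _ (Nat.mod_modEq _ _)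
  have h2 : (a * ℓ) * (w.length - 2) = a * ((w.length - 2) * ℓ) := by ring
  have h3 : a * ((w.length - 2) * ℓ) ≡ a * 1 [MOD w.length] :=
    Nat.ModEq.mul_left a (inv_key w ℓ hl)
  have h4 : (a * ℓ % w.length) * (w.length - 2) ≡ a [MOD w.length] := by
    rw [h2] at h1
    exact (h1.trans h3).trans (by rw [Nat.mul_one])
  rw [Nat.ModEq, Nat.mod_eq_of_lt ha] at h4
  exact h4

lemma inv_cancel_right (w : List ℕ) (ℓ : ℕ) (hl : w.length = 2 * ℓ + 1) {a : ℕ}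
    (ha : a < w.length) : (a * (w.length - 2) % w.length) * ℓ % w.length = a := by
  have h1 : (a * (w.length - 2) % w.length) * ℓ ≡ (a * (w.length - 2)) * ℓ [MOD w.length] :=
    Nat.ModEq.mul_right _ (Nat.mod_modEq _ _)
  have h2 : (a * (w.length - 2)) * ℓ = a * ((w.length - 2) * ℓ) := by ring
  have h3 : a * ((w.length - 2) * ℓ) ≡ a * 1 [MOD w.length] :=
    Nat.ModEq.mul_left a (inv_key w ℓ hl)
  have h4 : (a * (w.length - 2) % w.length) * ℓ ≡ a [MOD w.length] := by
    rw [h2] at h1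
    exact (h1.trans h3).trans (by rw [Nat.mul_one])
  rw [Nat.ModEq, Nat.mod_eq_of_lt ha] at h4
  exact h4

lemma sum_chi_read (w : List ℕ) (ℓ : ℕ) (hl : w.length = 2 * ℓ + 1) :
    (∑ c ∈ Finset.range (readStep w ℓ).length, chi (readStep w ℓ) c)
      = ∑ c ∈ Finset.range w.length, chi w c := by
  have hpos : 0 < w.length := by omega
  rw [readStep_length w ℓ]
  rw [Finset.sum_congr rfl (fun c _ => chi_read w ℓ hpos c)]
  refine Finset.sum_nbij' (fun c => c * ℓ % w.length) (fun c => c * (w.length - 2) % w.length)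
    ?_ ?_ ?_ ?_ ?_
  · intro a _; exact Finset.mem_range.mpr (Nat.mod_lt _ hpos)
  · intro a _; exact Finset.mem_range.mpr (Nat.mod_lt _ hpos)
  · intro a ha; exact inv_cancel_left w ℓ hl (Finset.mem_range.mp ha)
  · intro a ha; exact inv_cancel_right w ℓ hl (Finset.mem_range.mp ha)
  · intro a _; exact (chi_mod w (a * ℓ)).symm

lemma cov (w : List ℕ) (ℓ : ℕ) (hl : w.length = 2 * ℓ + 1) (b : ℕ) :
    gE (readStep w ℓ) ℓ b = cnt w (b * ℓ + (w.length - ℓ)) (ℓ + 1) := by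
  have hpos : 0 < w.length := by omega
  unfold gE cnt
  rw [← Finset.sum_range_reflect (fun i => chi w (b * ℓ + (w.length - ℓ) + i)) (ℓ + 1)]
  refine Finset.sum_congr rfl (fun i hi => ?_)
  rw [Finset.mem_range] at hi
  rw [chi_read w ℓ hpos]
  apply chi_congr
  show (b + 2 * i) * ℓ % w.length = (b * ℓ + (w.length - ℓ) + (ℓ + 1 - 1 - i)) % w.length
  have e1 : (b + 2 * i) * ℓ = b * ℓ + 2 * ℓ * i := by ring
  have e2 : w.length * i = 2 * ℓ * i + i := by rw [hl]; ring
  have e4 : (b + 2 * i) * ℓ + w.length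
      = (b * ℓ + (w.length - ℓ) + (ℓ + 1 - 1 - i)) + w.length * i := by omega
  calc (b + 2 * i) * ℓ % w.length
      = ((b + 2 * i) * ℓ + w.length) % w.length := (Nat.add_mod_right _ _).symm
    _ = ((b * ℓ + (w.length - ℓ) + (ℓ + 1 - 1 - i)) + w.length * i) % w.length := by rw [e4]
    _ = (b * ℓ + (w.length - ℓ) + (ℓ + 1 - 1 - i)) % w.length :=
        Nat.add_mul_mod_self_left _ _ _

lemma cnt_congr (w : List ℕ) {k k' : ℕ} (r : ℕ) (h : k ≡ k' [MOD w.length]) :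
    cnt w k r = cnt w k' r := by
  unfold cnt
  exact Finset.sum_congr rfl (fun i _ => chi_congr w (Nat.ModEq.add_right i h))

lemma cond_of_condU (w : List ℕ) (ℓ s : ℕ) (hl : w.length = 2 * ℓ + 1)
    (h : ∀ b, s ≤ gE (readStep w ℓ) ℓ b) : ∀ k, s ≤ cnt w k (ℓ + 1) := by
  intro k
  have hpos : 0 < w.length := by omega
  have hb := h ((k + ℓ) * (w.length - 2))
  rw [cov w ℓ hl] at hb
  have hcongr : (k + ℓ) * (w.length - 2) * ℓ + (w.length - ℓ) ≡ k [MOD w.length] := by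
    have h1 : (k + ℓ) * (w.length - 2) * ℓ = (k + ℓ) * ((w.length - 2) * ℓ) := by ring
    have h2 : (k + ℓ) * ((w.length - 2) * ℓ) ≡ (k + ℓ) * 1 [MOD w.length] :=
      Nat.ModEq.mul_left _ (inv_key w ℓ hl)
    have h3 : (k + ℓ) * (w.length - 2) * ℓ + (w.length - ℓ)
        ≡ (k + ℓ) * 1 + (w.length - ℓ) [MOD w.length] := by
      rw [h1]
      exact Nat.ModEq.add_right _ h2
    have h4 : (k + ℓ) * 1 + (w.length - ℓ) = k + w.length := by
      have : ℓ ≤ w.length := by omega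
      omega
    rw [h4] at h3
    exact h3.trans (Nat.add_modEq_right)
  rwa [cnt_congr w (ℓ + 1) hcongr] at hb

end Stmt7

/-- Bouchet: a word over {2,3} of even height and odd length `2*ℓ+1` is a rop-word iff
`w^(ℓ)` admits a `1`-pairing (its 3s pair up cyclically adjacently). -/
theorem stmt_7 (w : List ℕ) (hw : ∀ a ∈ w, a = 2 ∨ a = 3) (he : Even w.sum)
    (ℓ : ℕ) (hl : w.length = 2 * ℓ + 1) :
    IsRopWord w ↔ HasDPairing (readStep w ℓ) 1 := by
  open Stmt7 in
  have hpos : 0 < w.length := by omega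
  have hte : (∑ c ∈ Finset.range w.length, Stmt7.chi w c) % 2 = 0 := by
    have h1 := Stmt7.wsum_eq w hw hpos
    have h2 := Nat.even_iff.mp he
    omega
  obtain ⟨s, hs⟩ : ∃ s, (∑ c ∈ Finset.range w.length, Stmt7.chi w c) = 2 * s :=
    ⟨(∑ c ∈ Finset.range w.length, Stmt7.chi w c) / 2, by omega⟩
  have hulen2 : (readStep w ℓ).length = 2 * ℓ + 1 := by
    rw [Stmt7.readStep_length w ℓ, hl]
  have hsu : (∑ c ∈ Finset.range (readStep w ℓ).length, Stmt7.chi (readStep w ℓ) c) = 2 * s := by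
    rw [Stmt7.sum_chi_read w ℓ hl, hs]
  constructor
  · rintro ⟨_, _, P⟩
    have hwin := (Stmt7.ropIff w hw hpos s hs).mp P
    have hcond := Stmt7.nowin_to_cond w hw ℓ s hl hs hwin
    have hcondU : ∀ b, s ≤ Stmt7.gE (readStep w ℓ) ℓ b := fun b => by
      rw [Stmt7.cov w ℓ hl b]; exact hcond _
    obtain ⟨S, h1, h2, h3, h4⟩ := Stmt7.buildPairing (readStep w ℓ) ℓ s hulen2 hsu hcondU
    exact ⟨S, h1, h2, h3, h4⟩
  · rintro ⟨S, h1, h2, h3, h4⟩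
    have hcondU := Stmt7.pairing_cond (readStep w ℓ) ℓ s hulen2 hsu S h1 h2 h3 h4
    have hcond := Stmt7.cond_of_condU w ℓ s hl hcondU
    exact ⟨hw, he, (Stmt7.ropIff w hw hpos s hs).mpr
      (Stmt7.cond_to_nowin w hw ℓ s hl hs hcond)⟩
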